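/- Let l ≥ 1 be an integer, let t, u, v ∈ ℂ, and let R > |t|. Then (1/(2πi)) ∮_{|z|=R} ((1 − u)^l·t^l·z^{l−1} − (1 − v)^l·z^{2l−1}) / (z² + t²)^l dz = −(1 − v)^l. -/

import Mathlib

open Complex Metric Real intervalIntegral

private lemma sq_circleMap (R θ : ℝ) :
    circleMap 0 R θ ^ 2 = circleMap 0 (R ^ 2) (2 * θ) := by
  simp only [circleMap, zero_add]
  have h : ((2 * θ : ℝ) : ℂ) * I = (θ : ℂ) * I + (θ : ℂ) * I := by push_cast; ring
  rw [h, Complex.exp_add]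
  push_cast
  ring

private lemma circleMap_sq_mem (R : ℝ) (hR : 0 < R) (θ : ℝ) :
    circleMap 0 (R ^ 2) θ ∈ sphere (0 : ℂ) (R ^ 2) :=
  circleMap_mem_sphere 0 (by positivity) θ

/-- Substitution `w = z²` : `∮_{|z|=R} g(z²)·z dz = ∮_{|w|=R²} g(w) dw`. -/
private lemma lemA (R : ℝ) (hR : 0 < R) (g : ℂ → ℂ)
    (hg : ContinuousOn g (sphere (0 : ℂ) (R ^ 2))) :
    (∮ z in C(0, R), g (z ^ 2) * z) = ∮ w in C(0, R ^ 2), g w := by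
  set h : ℝ → ℂ := fun φ => deriv (circleMap 0 (R ^ 2)) φ • g (circleMap 0 (R ^ 2) φ) with hh
  have hcont : Continuous h := by
    simp only [hh, deriv_circleMap, smul_eq_mul]
    exact ((continuous_circleMap _ _).mul continuous_const).mul
      (hg.comp_continuous (continuous_circleMap _ _) (circleMap_sq_mem R hR))
  have hint : ∀ a b : ℝ, IntervalIntegrable h MeasureTheory.volume a b :=
    fun a b => hcont.intervalIntegrable a b
  have key : ∀ θ : ℝ,
      deriv (circleMap 0 R) θ • (g (circleMap 0 R θ ^ 2) * circleMap 0 R θ) = h (2 * θ) := by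
    intro θ
    have h2 := sq_circleMap R θ
    simp only [hh, deriv_circleMap, smul_eq_mul, ← h2]
    ring
  have per : ∀ x : ℝ, h (x + 2 * π) = h x := by
    intro x
    simp only [hh, deriv_circleMap, periodic_circleMap 0 (R ^ 2) x]
  have split : (∫ θ in (0 : ℝ)..(2 * (2 * π)), h θ)
      = (∫ θ in (0 : ℝ)..(2 * π), h θ) + ∫ θ in (2 * π)..(2 * (2 * π)), h θ :=
    (integral_add_adjacent_intervals (hint _ _) (hint _ _)).symm
  have shift : (∫ θ in (2 * π)..(2 * (2 * π)), h θ) = ∫ θ in (0 : ℝ)..(2 * π), h θ := by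
    calc (∫ θ in (2 * π)..(2 * (2 * π)), h θ)
        = ∫ x in (0 : ℝ)..(2 * π), h (x + 2 * π) := by
          rw [integral_comp_add_right]; congr 1 <;> ring
      _ = ∫ x in (0 : ℝ)..(2 * π), h x := by simp only [per]
  calc (∮ z in C(0, R), g (z ^ 2) * z)
      = ∫ θ in (0 : ℝ)..(2 * π), h (2 * θ) := by
        simp only [circleIntegral]
        exact intervalIntegral.integral_congr fun θ _ => key θ
    _ = (2 : ℝ)⁻¹ • ∫ θ in (0 : ℝ)..(2 * (2 * π)), h θ := by
        have := integral_comp_mul_left (a := (0 : ℝ)) (b := 2 * π) h (two_ne_zero)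
        rw [this]; norm_num
    _ = ∫ θ in (0 : ℝ)..(2 * π), h θ := by
        rw [split, shift, ← two_smul ℝ (∫ θ in (0 : ℝ)..(2 * π), h θ), smul_smul]
        norm_num
    _ = ∮ w in C(0, R ^ 2), g w := rfl

/-- `∮_{|z|=R} g(z²) dz = 0`. -/
private lemma lemB (R : ℝ) (hR : 0 < R) (g : ℂ → ℂ)
    (hg : ContinuousOn g (sphere (0 : ℂ) (R ^ 2))) :
    (∮ z in C(0, R), g (z ^ 2)) = 0 := by
  set k : ℝ → ℂ := fun φ => ((R : ℂ) * Complex.exp (((φ / 2 : ℝ) : ℂ) * I) * I)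
      * g (circleMap 0 (R ^ 2) φ) with hk
  have hcont : Continuous k := by
    apply Continuous.mul
    · exact (continuous_const.mul (Complex.continuous_exp.comp
        (((Complex.continuous_ofReal.comp (continuous_id.div_const 2))).mul
          continuous_const))).mul continuous_const
    · exact hg.comp_continuous (continuous_circleMap _ _) (circleMap_sq_mem R hR)
  have hint : ∀ a b : ℝ, IntervalIntegrable k MeasureTheory.volume a b :=
    fun a b => hcont.intervalIntegrable a b
  have key : ∀ θ : ℝ, deriv (circleMap 0 R) θ • g (circleMap 0 R θ ^ 2) = k (2 * θ) := by
    intro θ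
    have h2 := sq_circleMap R θ
    have ha : ((2 * θ / 2 : ℝ) : ℂ) = (θ : ℝ) := by push_cast; ring
    simp only [hk, ha, deriv_circleMap, smul_eq_mul]
    rw [← h2]
    simp only [circleMap, zero_add]
  have antiper : ∀ x : ℝ, k (x + 2 * π) = -k x := by
    intro x
    have h1 : (((x + 2 * π) / 2 : ℝ) : ℂ) * I = ((x / 2 : ℝ) : ℂ) * I + π * I := by
      push_cast; ring
    simp only [hk, periodic_circleMap 0 (R ^ 2) x, h1, Complex.exp_add, Complex.exp_pi_mul_I]
    ring
  have split : (∫ θ in (0 : ℝ)..(2 * (2 * π)), k θ)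
      = (∫ θ in (0 : ℝ)..(2 * π), k θ) + ∫ θ in (2 * π)..(2 * (2 * π)), k θ :=
    (integral_add_adjacent_intervals (hint _ _) (hint _ _)).symm
  have shift : (∫ θ in (2 * π)..(2 * (2 * π)), k θ) = -∫ θ in (0 : ℝ)..(2 * π), k θ := by
    calc (∫ θ in (2 * π)..(2 * (2 * π)), k θ)
        = ∫ x in (0 : ℝ)..(2 * π), k (x + 2 * π) := by
          rw [integral_comp_add_right]; congr 1 <;> ring
      _ = -∫ x in (0 : ℝ)..(2 * π), k x := by
          simp only [antiper]; exact intervalIntegral.integral_neg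
  calc (∮ z in C(0, R), g (z ^ 2))
      = ∫ θ in (0 : ℝ)..(2 * π), k (2 * θ) := by
        simp only [circleIntegral]
        exact intervalIntegral.integral_congr fun θ _ => key θ
    _ = (2 : ℝ)⁻¹ • ∫ θ in (0 : ℝ)..(2 * (2 * π)), k θ := by
        have := integral_comp_mul_left (a := (0 : ℝ)) (b := 2 * π) k (two_ne_zero)
        rw [this]; norm_num
    _ = 0 := by rw [split, shift]; simp

private lemma CircleIntegrable.const_mul' {f : ℂ → ℂ} {c : ℂ} {R : ℝ}
    (hf : CircleIntegrable f c R) (a : ℂ) : CircleIntegrable (fun z => a * f z) c R := by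
  rw [circleIntegrable_iff] at hf ⊢
  have : (fun θ => deriv (circleMap c R) θ • (a * f (circleMap c R θ)))
      = fun θ => a * (deriv (circleMap c R) θ • f (circleMap c R θ)) := by
    funext θ; simp only [smul_eq_mul]; ring
  rw [this]
  exact hf.const_mul a

private lemma circleIntegral_finset_sum {ι : Type*} (s : Finset ι) (f : ι → ℂ → ℂ) (c : ℂ)
    (R : ℝ) (h : ∀ i ∈ s, CircleIntegrable (f i) c R) :
    (∮ z in C(c, R), ∑ i ∈ s, f i z) = ∑ i ∈ s, ∮ z in C(c, R), f i z := by
  simp only [circleIntegral, smul_eq_mul, Finset.mul_sum]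
  rw [← intervalIntegral.integral_finset_sum]
  intro i hi
  have := (circleIntegrable_iff (f := f i) (c := c) R).mp (h i hi)
  simpa only [smul_eq_mul] using this

/-- Residue computation for a single pole of order `n` at `a`. -/
private lemma lemC (m n : ℕ) (hmn : m < n) (a : ℂ) (r : ℝ) (ha : ‖a‖ < r) :
    (∮ w in C(0, r), w ^ m / (w - a) ^ n)
      = if m + 1 = n then 2 * (π : ℂ) * I else 0 := by
  have hr : 0 < r := (norm_nonneg a).trans_lt ha
  have ha' : a ∉ sphere (0 : ℂ) |r| := by
    simp only [mem_sphere_zero_iff_norm, abs_of_pos hr]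
    exact ha.ne
  have hsp : ∀ w ∈ sphere (0 : ℂ) r, w - a ≠ 0 := by
    intro w hw
    rw [mem_sphere_zero_iff_norm] at hw
    intro hwa
    rw [sub_eq_zero] at hwa
    rw [hwa] at hw
    exact absurd hw ha.ne
  have key : Set.EqOn (fun w => w ^ m / (w - a) ^ n)
      (fun w => ∑ k ∈ Finset.range (m + 1),
        (m.choose k : ℂ) * a ^ (m - k) * (w - a) ^ ((k : ℤ) - n)) (sphere (0 : ℂ) r) := by
    intro w hw
    have hwa : w - a ≠ 0 := hsp w hw
    have hb : w ^ m = ∑ k ∈ Finset.range (m + 1),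
        (w - a) ^ k * a ^ (m - k) * (m.choose k : ℂ) := by
      conv_lhs => rw [show w = (w - a) + a by ring]
      exact add_pow _ _ _
    simp only
    rw [hb, Finset.sum_div]
    refine Finset.sum_congr rfl fun k hk => ?_
    rw [zpow_sub₀ hwa, zpow_natCast, zpow_natCast, div_eq_mul_inv, div_eq_mul_inv]
    ring
  rw [circleIntegral.integral_congr hr.le key, circleIntegral_finset_sum]
  · have hterm : ∀ k ∈ Finset.range (m + 1),
        (∮ w in C(0, r), (m.choose k : ℂ) * a ^ (m - k) * (w - a) ^ ((k : ℤ) - n))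
          = if k + 1 = n then (m.choose k : ℂ) * a ^ (m - k) * (2 * (π : ℂ) * I) else 0 := by
      intro k hk
      rw [circleIntegral.integral_const_mul]
      by_cases hkn : k + 1 = n
      · have hkn' : ((k : ℤ) - n) = -1 := by omega
        rw [hkn', if_pos hkn]
        congr 1
        rw [show ((-1 : ℤ)) = -1 from rfl]
        simp only [zpow_neg, zpow_one]
        exact circleIntegral.integral_sub_inv_of_mem_ball (by simpa using ha)
      · rw [if_neg hkn, circleIntegral.integral_sub_zpow_of_ne (by omega) 0 a r, mul_zero]
    rw [Finset.sum_congr rfl hterm]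
    by_cases hc : m + 1 = n
    · rw [if_pos hc, Finset.sum_eq_single m]
      · rw [if_pos hc]; simp
      · intro k hk hkm
        rw [if_neg (by simp only [Finset.mem_range] at hk; omega)]
      · intro hm; exact absurd (Finset.self_mem_range_succ m) hm
    · rw [if_neg hc, Finset.sum_eq_zero]
      intro k hk
      rw [if_neg (by simp only [Finset.mem_range] at hk; omega)]
  · intro k hk
    refine CircleIntegrable.const_mul' ?_ _
    exact circleIntegrable_sub_zpow_iff.mpr (Or.inr (Or.inr ha'))

/-- For `l ≥ 1`, `t, u, v ∈ ℂ` and `R > |t|`,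
`(1/2πi) ∮_{|z|=R} ((1−u)^l t^l z^{l−1} − (1−v)^l z^{2l−1}) / (z²+t²)^l dz = −(1−v)^l`. -/
theorem theta_residue_computation (l : ℕ) (hl : 1 ≤ l) (t u v : ℂ) (R : ℝ)
    (hR : ‖t‖ < R) :
    (1 / (2 * (Real.pi : ℂ) * Complex.I)) *
      (∮ z in C(0, R),
        ((1 - u) ^ l * t ^ l * z ^ (l - 1) - (1 - v) ^ l * z ^ (2 * l - 1)) /
          (z ^ 2 + t ^ 2) ^ l) = -(1 - v) ^ l := by
  have hR0 : 0 < R := (norm_nonneg t).trans_lt hR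
  -- the pole `-t²` lies inside the circle of radius `R²`
  have hpole : ‖-t ^ 2‖ < R ^ 2 := by
    rw [norm_neg, norm_pow]
    have := norm_nonneg t
    nlinarith
  -- denominator nonvanishing on related spheres
  have hden2 : ∀ w ∈ sphere (0 : ℂ) (R ^ 2), w + t ^ 2 ≠ 0 := by
    intro w hw hwt
    rw [mem_sphere_zero_iff_norm] at hw
    have : w = -t ^ 2 := by linear_combination hwt
    rw [this] at hw
    exact absurd hw hpole.ne
  have hden : ∀ z ∈ sphere (0 : ℂ) R, (z ^ 2 + t ^ 2) ≠ 0 := by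
    intro z hz hzt
    rw [mem_sphere_zero_iff_norm] at hz
    have h2 : z ^ 2 = -t ^ 2 := by linear_combination hzt
    have : ‖z ^ 2‖ < R ^ 2 := h2 ▸ hpole
    rw [norm_pow] at this
    nlinarith
  -- continuity helpers
  have hcont_pow : ∀ m : ℕ, ContinuousOn (fun w : ℂ => w ^ m / (w + t ^ 2) ^ l)
      (sphere (0 : ℂ) (R ^ 2)) := by
    intro m
    exact (continuousOn_pow m).div ((continuousOn_id.add continuousOn_const).pow l)
      (fun w hw => pow_ne_zero _ (hden2 w hw))
  -- the two pieces of the integrand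
  have hc1 : ContinuousOn (fun z : ℂ => (1 - u) ^ l * t ^ l *
      (z ^ (l - 1) / (z ^ 2 + t ^ 2) ^ l)) (sphere (0 : ℂ) R) :=
    continuousOn_const.mul ((continuousOn_pow _).div
      (((continuousOn_pow 2).add continuousOn_const).pow l)
      (fun z hz => pow_ne_zero _ (hden z hz)))
  have hc2 : ContinuousOn (fun z : ℂ => (1 - v) ^ l *
      (z ^ (2 * l - 1) / (z ^ 2 + t ^ 2) ^ l)) (sphere (0 : ℂ) R) :=
    continuousOn_const.mul ((continuousOn_pow _).div
      (((continuousOn_pow 2).add continuousOn_const).pow l)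
      (fun z hz => pow_ne_zero _ (hden z hz)))
  -- rewrite the integrand as a difference
  have hsplit : (∮ z in C(0, R),
        ((1 - u) ^ l * t ^ l * z ^ (l - 1) - (1 - v) ^ l * z ^ (2 * l - 1)) /
          (z ^ 2 + t ^ 2) ^ l)
      = (1 - u) ^ l * t ^ l * (∮ z in C(0, R), z ^ (l - 1) / (z ^ 2 + t ^ 2) ^ l)
        - (1 - v) ^ l * (∮ z in C(0, R), z ^ (2 * l - 1) / (z ^ 2 + t ^ 2) ^ l) := by
    simp only [sub_div, mul_div_assoc]
    rw [circleIntegral.integral_sub (hc1.circleIntegrable hR0.le) (hc2.circleIntegrable hR0.le),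
      circleIntegral.integral_const_mul, circleIntegral.integral_const_mul]
  -- second integral: `2πi`
  have hI2 : (∮ z in C(0, R), z ^ (2 * l - 1) / (z ^ 2 + t ^ 2) ^ l) = 2 * (π : ℂ) * I := by
    have heq : Set.EqOn (fun z : ℂ => z ^ (2 * l - 1) / (z ^ 2 + t ^ 2) ^ l)
        (fun z : ℂ => ((z ^ 2) ^ (l - 1) / ((z ^ 2) + t ^ 2) ^ l) * z) (sphere (0 : ℂ) R) := by
      intro z _
      simp only
      rw [div_mul_eq_mul_div, ← pow_mul, ← pow_succ]
      congr 2
      omega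
    rw [circleIntegral.integral_congr hR0.le heq,
      lemA R hR0 (fun w => w ^ (l - 1) / (w + t ^ 2) ^ l) (hcont_pow (l - 1))]
    have heq2 : Set.EqOn (fun w : ℂ => w ^ (l - 1) / (w + t ^ 2) ^ l)
        (fun w : ℂ => w ^ (l - 1) / (w - (-t ^ 2)) ^ l) (sphere (0 : ℂ) (R ^ 2)) := by
      intro w _; simp only [sub_neg_eq_add]
    rw [circleIntegral.integral_congr (by positivity) heq2,
      lemC (l - 1) l (by omega) (-t ^ 2) (R ^ 2) hpole, if_pos (by omega)]
  -- first integral: `0`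
  have hI1 : (∮ z in C(0, R), z ^ (l - 1) / (z ^ 2 + t ^ 2) ^ l) = 0 := by
    rcases Nat.even_or_odd l with ⟨j, hj⟩ | ⟨j, hj⟩
    · -- l even, l = j + j with j ≥ 1 ; z^(l-1) = (z²)^(j-1) * z
      have hj1 : 1 ≤ j := by omega
      have heq : Set.EqOn (fun z : ℂ => z ^ (l - 1) / (z ^ 2 + t ^ 2) ^ l)
          (fun z : ℂ => ((z ^ 2) ^ (j - 1) / ((z ^ 2) + t ^ 2) ^ l) * z) (sphere (0 : ℂ) R) := by
        intro z _
        simp only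
        rw [div_mul_eq_mul_div, ← pow_mul, ← pow_succ]
        congr 2
        omega
      rw [circleIntegral.integral_congr hR0.le heq,
        lemA R hR0 (fun w => w ^ (j - 1) / (w + t ^ 2) ^ l) (hcont_pow (j - 1))]
      have heq2 : Set.EqOn (fun w : ℂ => w ^ (j - 1) / (w + t ^ 2) ^ l)
          (fun w : ℂ => w ^ (j - 1) / (w - (-t ^ 2)) ^ l) (sphere (0 : ℂ) (R ^ 2)) := by
        intro w _; simp only [sub_neg_eq_add]
      rw [circleIntegral.integral_congr (by positivity) heq2,
        lemC (j - 1) l (by omega) (-t ^ 2) (R ^ 2) hpole, if_neg (by omega)]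
    · -- l odd, l = 2j + 1 ; z^(l-1) = (z²)^j
      have heq : Set.EqOn (fun z : ℂ => z ^ (l - 1) / (z ^ 2 + t ^ 2) ^ l)
          (fun z : ℂ => (z ^ 2) ^ j / ((z ^ 2) + t ^ 2) ^ l) (sphere (0 : ℂ) R) := by
        intro z _
        simp only
        rw [← pow_mul]
        congr 2
        omega
      rw [circleIntegral.integral_congr hR0.le heq]
      exact lemB R hR0 (fun w => w ^ j / (w + t ^ 2) ^ l) (hcont_pow j)
  rw [hsplit, hI1, hI2, mul_zero, zero_sub]
  have h2pi : (2 * (π : ℂ) * I) ≠ 0 := by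
    simp [Real.pi_ne_zero, Complex.I_ne_zero, Complex.ofReal_ne_zero]
  field_simp
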